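/- Let X, Y be Banach spaces, U ⊆ X open, and R : U → Y a map whose Gateaux derivatives up to order k exist, are continuous in the point of U, and are multilinear in the directions. Then R is k times continuously Fréchet differentiable on U. -/

import Mathlib

set_option maxHeartbeats 1000000

lemma hasDerivAt_of_hasLineDerivAt {X E : Type*} [NormedAddCommGroup X] [NormedSpace ℝ X]
    [NormedAddCommGroup E] [NormedSpace ℝ E] {f : X → E} {a : E} {u v : X} {t₀ : ℝ}
    (h : HasLineDerivAt ℝ f a (u + t₀ • v) v) :
    HasDerivAt (fun t : ℝ => f (u + t • v)) a t₀ := by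
  have h' : HasDerivAt (fun s : ℝ => f (u + t₀ • v + s • v)) a 0 := h
  rw [show (0:ℝ) = t₀ - t₀ by ring] at h'
  have hc : HasDerivAt (fun t : ℝ => t - t₀) 1 t₀ := (hasDerivAt_id t₀).sub_const t₀
  have := HasDerivAt.scomp (h := fun t : ℝ => t - t₀)
    (g₁ := fun s : ℝ => f (u + t₀ • v + s • v)) t₀ h' hc
  simp only [one_smul] at this
  have heq : ((fun s : ℝ => f (u + t₀ • v + s • v)) ∘ fun t : ℝ => t - t₀)
      = fun t : ℝ => f (u + t • v) := by
    funext t; simp only [Function.comp_apply]; congr 1; module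
  rwa [heq] at this

theorem stmt_10 {X Y : Type*} [NormedAddCommGroup X] [NormedSpace ℝ X] [CompleteSpace X]
    [NormedAddCommGroup Y] [NormedSpace ℝ Y] [CompleteSpace Y]
    (k : ℕ) (U : Set X) (hU : IsOpen U) (R : X → Y)
    (G : (m : ℕ) → X → ContinuousMultilinearMap ℝ (fun _ : Fin m => X) Y)
    (hG0 : ∀ u : X, (G 0 u) 0 = R u)
    (hgateaux : ∀ m : ℕ, m < k → ∀ u ∈ U, ∀ v : X, ∀ w : Fin m → X,
      HasLineDerivAt ℝ (fun u' : X => G m u' w) (G (m + 1) u (Fin.cons v w)) u v)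
    (hcont : ∀ m : ℕ, m ≤ k → ContinuousOn (fun u : X => G m u) U) :
    ContDiffOn ℝ (k : ℕ∞) R U := by
  have key : ∀ m, m < k → ∀ u ∈ U, HasFDerivAt (fun y => G m y) ((G (m+1) u).curryLeft) u := by
    intro m hm u hu
    rw [hasFDerivAt_iff_isLittleO_nhds_zero, Asymptotics.isLittleO_iff]
    intro c hc
    have hGc : ContinuousAt (fun y => G (m+1) y) u :=
      (hcont (m+1) (by omega) u hu).continuousAt (hU.mem_nhds hu)
    have hev : ∀ᶠ y in nhds u, ‖G (m+1) y - G (m+1) u‖ ≤ c ∧ y ∈ U := by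
      filter_upwards [hGc (Metric.closedBall_mem_nhds _ hc), hU.mem_nhds hu] with y h1 h2
      refine ⟨?_, h2⟩
      simpa [dist_eq_norm] using h1
    obtain ⟨δ, hδpos, hδ⟩ := Metric.eventually_nhds_iff_ball.1 hev
    filter_upwards [Metric.ball_mem_nhds 0 hδpos] with h hh
    rw [Metric.mem_ball, dist_zero_right] at hh
    have hmem : ∀ t : ℝ, t ∈ Set.Icc (0:ℝ) 1 → u + t • h ∈ Metric.ball u δ := by
      intro t ht
      rw [Metric.mem_ball, dist_eq_norm]
      have : ‖u + t • h - u‖ = |t| * ‖h‖ := by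
        rw [add_sub_cancel_left, norm_smul, Real.norm_eq_abs]
      rw [this]
      calc |t| * ‖h‖ ≤ 1 * ‖h‖ := by
              apply mul_le_mul_of_nonneg_right _ (norm_nonneg h)
              rw [abs_le]; exact ⟨le_trans (by norm_num) ht.1, ht.2⟩
        _ < δ := by rwa [one_mul]
    refine ContinuousMultilinearMap.opNorm_le_bound
      (mul_nonneg hc.le (norm_nonneg h)) (fun w => ?_)
    set A := G (m+1) u (Fin.cons h w) with hA
    set g : ℝ → Y := fun t => G m (u + t • h) w - t • A with hg
    have hderiv : ∀ t ∈ Set.Icc (0:ℝ) 1,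
        HasDerivWithinAt g ((G (m+1) (u + t • h) - G (m+1) u) (Fin.cons h w))
          (Set.Icc (0:ℝ) 1) t := by
      intro t ht
      have h1 : HasDerivAt (fun t : ℝ => G m (u + t • h) w)
          (G (m+1) (u + t • h) (Fin.cons h w)) t :=
        hasDerivAt_of_hasLineDerivAt
          (hgateaux m hm (u + t • h) ((hδ _ (hmem t ht)).2) h w)
      have h2 : HasDerivAt (fun t : ℝ => t • A) A t := by
        simpa using (hasDerivAt_id t).smul_const A
      have := (h1.sub h2).hasDerivWithinAt (s := Set.Icc (0:ℝ) 1)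
      rw [ContinuousMultilinearMap.sub_apply]
      exact this
    have hbound : ∀ t ∈ Set.Icc (0:ℝ) 1,
        ‖(G (m+1) (u + t • h) - G (m+1) u) (Fin.cons h w)‖
          ≤ (c * ‖h‖) * ∏ i, ‖w i‖ := by
      intro t ht
      have hle := ContinuousMultilinearMap.le_opNorm
        (G (m+1) (u + t • h) - G (m+1) u) (Fin.cons h w)
      rw [Fin.prod_univ_succ] at hle
      simp only [Fin.cons_zero, Fin.cons_succ] at hle
      calc ‖(G (m+1) (u + t • h) - G (m+1) u) (Fin.cons h w)‖
          ≤ ‖G (m+1) (u + t • h) - G (m+1) u‖ * (‖h‖ * ∏ i, ‖w i‖) := hle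
        _ ≤ c * (‖h‖ * ∏ i, ‖w i‖) :=
            mul_le_mul_of_nonneg_right (hδ _ (hmem t ht)).1
              (mul_nonneg (norm_nonneg _) (Finset.prod_nonneg fun i _ => norm_nonneg _))
        _ = (c * ‖h‖) * ∏ i, ‖w i‖ := by ring
    have mvt := (convex_Icc (0:ℝ) 1).norm_image_sub_le_of_norm_hasDerivWithin_le hderiv hbound
      (Set.left_mem_Icc.2 zero_le_one) (Set.right_mem_Icc.2 zero_le_one)
    have hg1 : g 1 - g 0 = G m (u + h) w - G m u w - A := by
      simp only [hg, one_smul, zero_smul, sub_zero]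
      abel_nf
    rw [hg1] at mvt
    have : ‖(G m (u + h) - G m u - (G (m+1) u).curryLeft h) w‖
        = ‖G m (u + h) w - G m u w - A‖ := by
      simp [ContinuousMultilinearMap.sub_apply, hA]
    rw [this]
    calc ‖G m (u + h) w - G m u w - A‖ ≤ (c * ‖h‖) * (∏ i, ‖w i‖) * ‖(1:ℝ) - 0‖ := mvt
      _ = c * ‖h‖ * ∏ i, ‖w i‖ := by norm_num
  refine HasFTaylorSeriesUpToOn.contDiffOn (f' := fun x m => G m x) ?_
  constructor
  · intro x hx
    exact hG0 x
  · intro m' hm' x hx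
    exact (key m' (by exact_mod_cast hm') x hx).hasFDerivWithinAt
  · intro m' hm'
    exact hcont m' (by exact_mod_cast hm')
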